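/- arXiv:1505.03967 — 3 statements merged into one kernel-verified Lean document; each statement's English description precedes it below -/
import Mathlib

section
/- For every real number γ with 0 < γ ≤ 2 and every natural number m ≥ 1, one has |ψ(γ, m)| ≤ |ψ(γ, m-1)|; that is, the sequence m ↦ |ψ(γ, m)| of absolute values of the Grünwald–Letnikov weights is monotonically decreasing. -/
/-- Generalized binomial coefficient `C(a, m) = (∏_{n=0}^{m-1} (a - n)) / m!`. -/
noncomputable def genBinom (a : ℝ) (m : ℕ) : ℝ :=
  (∏ n ∈ Finset.range m, (a - (n : ℝ))) / (m.factorial : ℝ)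

/-- Grünwald–Letnikov weight `ψ(γ, m) = (-1)^m · C(1-γ, m)`. -/
noncomputable def psi (γ : ℝ) (m : ℕ) : ℝ :=
  (-1 : ℝ) ^ m * genBinom (1 - γ) m

lemma abs_psi_succ (γ : ℝ) (k : ℕ) :
    |psi γ (k + 1)| = |psi γ k| * (|1 - γ - k| / (k + 1)) := by
  simp only [psi, genBinom, abs_mul, abs_pow, abs_neg, abs_one, one_pow, one_mul,
    Finset.prod_range_succ, abs_div, Nat.factorial_succ, Nat.cast_mul]
  have h1 : (0:ℝ) < k + 1 := by positivity
  have h2 : (0:ℝ) < (Nat.factorial k : ℝ) := by positivity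
  rw [abs_of_pos (by exact_mod_cast Nat.cast_pos.mpr k.succ_pos : (0:ℝ) < ((k+1:ℕ):ℝ)),
    abs_of_pos h2]
  push_cast
  rw [div_mul_div_comm, mul_comm ((k:ℝ)+1)]

theorem abs_psi_antitone (γ : ℝ) (hγ0 : 0 < γ) (hγ2 : γ ≤ 2) (m : ℕ) (hm : 1 ≤ m) :
    |psi γ m| ≤ |psi γ (m - 1)| := by
  obtain ⟨k, rfl⟩ := Nat.exists_eq_add_of_le hm
  simp only [Nat.add_sub_cancel_left, Nat.add_comm 1 k]
  rw [abs_psi_succ]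
  have hk : (0:ℝ) ≤ k := Nat.cast_nonneg k
  have hle : |1 - γ - (k:ℝ)| / (k + 1) ≤ 1 := by
    rw [div_le_one (by positivity)]
    rw [abs_le]
    constructor <;> linarith
  calc |psi γ k| * (|1 - γ - (k:ℝ)| / (k + 1)) ≤ |psi γ k| * 1 :=
        mul_le_mul_of_nonneg_left hle (abs_nonneg _)
    _ = |psi γ k| := mul_one _
end

section
/- For every real number γ with 0 < γ < 2, the Grünwald–Letnikov weights tend to zero: ψ(γ, m) → 0 as m → ∞. -/
set_option maxHeartbeats 400000

open Filter Finset Real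

lemma psi_eq (γ : ℝ) (m : ℕ) :
    psi γ m = ∏ n ∈ Finset.range m, (1 - (2 - γ) / ((n : ℝ) + 1)) := by
  unfold psi genBinom
  have h1 : ∀ n ∈ Finset.range m, (1 - (2 - γ) / ((n : ℝ) + 1))
      = (-1) * (1 - γ - (n : ℝ)) / ((n : ℝ) + 1) := by
    intro n _
    have hn : ((n : ℝ) + 1) ≠ 0 := by positivity
    field_simp
    ring
  rw [Finset.prod_congr rfl h1]
  rw [Finset.prod_div_distrib, Finset.prod_mul_distrib, Finset.prod_const,
    Finset.card_range]
  have h2 : ∏ n ∈ Finset.range m, ((n : ℝ) + 1) = (m.factorial : ℝ) := by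
    rw [← Finset.prod_range_add_one_eq_factorial m]
    push_cast
    rfl
  rw [h2]
  ring

theorem psi_tendsto_zero (γ : ℝ) (hγ0 : 0 < γ) (hγ2 : γ < 2) :
    Filter.Tendsto (fun m : ℕ => psi γ m) Filter.atTop (nhds 0) := by
  set c := 2 - γ with hc
  have hc0 : 0 < c := by simp [hc]; linarith
  have hc2 : c < 2 := by simp [hc]; linarith
  -- harmonic sum
  set H : ℕ → ℝ := fun m => ∑ i ∈ range m, 1 / ((i : ℝ) + 1) with hH
  have hbound : ∀ m, |psi γ m| ≤ Real.exp c * Real.exp (-c * H m) := by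
    intro m
    rw [psi_eq, Finset.abs_prod]
    have key : ∀ n ∈ range m, |1 - c / ((n : ℝ) + 1)|
        ≤ Real.exp (c * (if n = 0 then 1 else 0) - c / ((n : ℝ) + 1)) := by
      intro n _
      rcases Nat.eq_zero_or_pos n with h0 | h1
      · subst h0
        simp only [if_pos rfl, Nat.cast_zero, zero_add, div_one, mul_one]
        rw [abs_le]
        constructor <;> [skip; skip] <;> simp <;> linarith
      · have hn2 : (2 : ℝ) ≤ (n : ℝ) + 1 := by
          have : (1 : ℝ) ≤ (n : ℝ) := by exact_mod_cast h1
          linarith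
        have hnn : (0:ℝ) < (n : ℝ) + 1 := by positivity
        have hfr : c / ((n : ℝ) + 1) ≤ 1 := by
          rw [div_le_one hnn]; linarith
        have hge : 0 ≤ 1 - c / ((n : ℝ) + 1) := by linarith
        rw [if_neg (Nat.pos_iff_ne_zero.mp h1), mul_zero, zero_sub,
          abs_of_nonneg hge]
        have := Real.add_one_le_exp (-(c / ((n : ℝ) + 1)))
        linarith
    calc ∏ n ∈ range m, |1 - c / ((n : ℝ) + 1)|
        ≤ ∏ n ∈ range m, Real.exp (c * (if n = 0 then 1 else 0) - c / ((n : ℝ) + 1)) := by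
          apply Finset.prod_le_prod
          · intro n _; exact abs_nonneg _
          · exact key
      _ = Real.exp (∑ n ∈ range m, (c * (if n = 0 then 1 else 0) - c / ((n : ℝ) + 1))) := by
          rw [Real.exp_sum]
      _ ≤ Real.exp c * Real.exp (-c * H m) := by
          rw [← Real.exp_add]
          apply Real.exp_le_exp.mpr
          rw [Finset.sum_sub_distrib]
          have e1 : ∑ n ∈ range m, c * (if n = 0 then 1 else 0) ≤ c := by
            rw [← Finset.mul_sum]
            have : ∑ n ∈ range m, (if n = 0 then (1:ℝ) else 0) ≤ 1 := by
              rw [Finset.sum_ite_eq' (range m) 0 (fun _ => (1:ℝ))]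
              split <;> norm_num
            nlinarith
          have e2 : ∑ n ∈ range m, c / ((n : ℝ) + 1) = c * H m := by
            rw [hH, Finset.mul_sum]
            congr 1 with n
            field_simp
          rw [e2]
          linarith
  have hHtop : Tendsto H atTop atTop := tendsto_sum_range_one_div_nat_succ_atTop
  have hrhs : Tendsto (fun m => Real.exp c * Real.exp (-c * H m)) atTop (nhds 0) := by
    rw [show (0:ℝ) = Real.exp c * 0 by ring]
    apply Tendsto.const_mul
    have : Tendsto (fun m => -c * H m) atTop atBot := by
      simpa [neg_mul] using tendsto_neg_atBot_iff.mpr (hHtop.const_mul_atTop hc0)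
    exact Real.tendsto_exp_atBot.comp this
  exact squeeze_zero_norm hbound hrhs
end

section
/- Let c ∈ ℝ and let u : ℕ → ℤ → ℝ satisfy the one-dimensional Grünwald–Letnikov finite-difference scheme with γ = 2, namely u^{k+1}_j = u^k_j + c · ∑_{m=0}^{k} ψ(2, m) · (u^{k-m}_{j+1} - 2 u^{k-m}_j + u^{k-m}_{j-1}) for all k ∈ ℕ and j ∈ ℤ. Then for every k ≥ 1 and j ∈ ℤ, u satisfies the standard explicit wave scheme: u^{k+1}_j - 2 u^k_j + u^{k-1}_j = c · (u^{k}_{j+1} - 2 u^{k}_j + u^{k}_{j-1}). -/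
lemma prod_neg_one (m : ℕ) :
    ∏ n ∈ Finset.range m, ((-1 : ℝ) - (n : ℝ)) = (-1) ^ m * (m.factorial : ℝ) := by
  induction m with
  | zero => simp
  | succ m ih =>
      rw [Finset.prod_range_succ, ih, Nat.factorial_succ]
      push_cast
      ring

lemma psi_two (m : ℕ) : psi 2 m = 1 := by
  have hfac : (m.factorial : ℝ) ≠ 0 := by positivity
  simp only [psi, genBinom]
  norm_num
  rw [prod_neg_one]
  field_simp
  rw [← pow_mul, mul_comm, pow_mul]
  simp [pow_mul]

theorem gl_scheme_gamma_two_is_wave_scheme (c : ℝ) (u : ℕ → ℤ → ℝ)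
    (hu : ∀ k : ℕ, ∀ j : ℤ,
      u (k + 1) j = u k j + c * ∑ m ∈ Finset.range (k + 1),
        psi 2 m * (u (k - m) (j + 1) - 2 * u (k - m) j + u (k - m) (j - 1))) :
    ∀ k : ℕ, 1 ≤ k → ∀ j : ℤ,
      u (k + 1) j - 2 * u k j + u (k - 1) j =
        c * (u k (j + 1) - 2 * u k j + u k (j - 1)) := by
  have key : ∀ k : ℕ, ∀ j : ℤ,
      u (k + 1) j = u k j + c * ∑ i ∈ Finset.range (k + 1),
        (u i (j + 1) - 2 * u i j + u i (j - 1)) := by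
    intro k j
    have h := hu k j
    simp only [psi_two, one_mul] at h
    rw [h, ← Finset.sum_range_reflect (fun i => u i (j + 1) - 2 * u i j + u i (j - 1)) (k + 1)]
    simp
  rintro k hk j
  obtain ⟨n, rfl⟩ : ∃ n, k = n + 1 := ⟨k - 1, (Nat.succ_pred_eq_of_pos hk).symm⟩
  have h1 := key (n + 1) j
  have h2 := key n j
  rw [Finset.sum_range_succ] at h1
  simp only [Nat.add_sub_cancel]
  linarith
end
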